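/- For A ∈ ℚ^{m×n} and S ⊆ {1,…,n}: the condition [∀ nonzero v ∈ ℤⁿ ∩ ker(A): ∑_{i∈S}|vᵢ| < ∑_{i∉S}|vᵢ|] holds if and only if [∀ nonzero v ∈ ℝⁿ ∩ ker(A): ∑_{i∈S}|vᵢ| < ∑_{i∉S}|vᵢ|]. -/

import Mathlib

open Matrix Finset Module

private lemma mulVec_cast' {ι n : Type*} [Fintype ι] [Fintype n] (B : Matrix ι n ℚ) (w : n → ℚ) :
    (B.map ((↑) : ℚ → ℝ)).mulVec (fun i => (w i : ℝ)) = fun k => ((B.mulVec w k : ℚ) : ℝ) := by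
  funext k
  simp [Matrix.mulVec, dotProduct, Matrix.map]

private lemma li_cast {κ ι : Type*} [Fintype κ] [Fintype ι] [DecidableEq ι] [DecidableEq κ]
    (q : κ → (ι → ℚ)) (h : LinearIndependent ℚ q) :
    LinearIndependent ℝ (fun j => (fun i => ((q j i : ℝ)))) := by
  rw [Fintype.linearIndependent_iff]
  intro c hc j
  obtain ⟨ψ, hψ⟩ := LinearMap.exists_extend ((Basis.span h).coord j)
  have key : ∀ j', ψ (q j') = if j' = j then 1 else 0 := by
    intro j'
    have h1 : q j' = (Submodule.span ℚ (Set.range q)).subtype (Basis.span h j') := by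
      simp [Basis.span_apply]
    rw [h1, ← LinearMap.comp_apply, hψ, Basis.coord_apply, Basis.repr_self,
      Finsupp.single_apply]
  set a : ι → ℚ := fun i => ψ (fun k => if i = k then 1 else 0) with ha
  have hsum : ∀ w : ι → ℚ, ψ w = ∑ i, w i * a i := by
    intro w
    rw [ψ.pi_apply_eq_sum_univ w]
    simp [ha, smul_eq_mul]
  have hc' : ∀ i, ∑ j', c j' * (q j' i : ℝ) = 0 := by
    intro i
    have := congrFun hc i
    simpa using this
  have e2 : ∑ j', c j' * ((ψ (q j') : ℚ) : ℝ) = 0 := by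
    have hsumR : ∀ j', ((ψ (q j') : ℚ) : ℝ) = ∑ i, (q j' i : ℝ) * (a i : ℝ) := by
      intro j'; rw [hsum]; push_cast; rfl
    simp_rw [hsumR, Finset.mul_sum]
    rw [Finset.sum_comm]
    apply Finset.sum_eq_zero
    intro i _
    simp_rw [← mul_assoc]
    rw [← Finset.sum_mul, hc' i, zero_mul]
  have e1 : ∑ j', c j' * ((ψ (q j') : ℚ) : ℝ) = c j := by
    simp [key, apply_ite ((↑) : ℚ → ℝ), mul_ite, mul_one, mul_zero]
  rw [e2] at e1
  exact e1.symm

private lemma exists_near {ι n : Type*} [Fintype ι] [Fintype n] [DecidableEq n] [DecidableEq ι]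
    (B : Matrix ι n ℚ) (v : n → ℝ) (hv : (B.map ((↑) : ℚ → ℝ)).mulVec v = 0)
    {δ : ℝ} (hδ : 0 < δ) :
    ∃ w : n → ℚ, B.mulVec w = 0 ∧ ∀ i, |(w i : ℝ) - v i| < δ := by
  classical
  set g := (B.map ((↑) : ℚ → ℝ)).mulVecLin with hg
  set K := LinearMap.ker B.mulVecLin with hK
  set d := finrank ℚ K with hd
  let bK : Basis (Fin d) ℚ K := Module.finBasis ℚ K
  set q : Fin d → (n → ℚ) := fun j => (bK j : n → ℚ) with hq
  have hqK : ∀ j, B.mulVec (q j) = 0 := fun j => (bK j).2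
  have hqli : LinearIndependent ℚ q := bK.linearIndependent.map' K.subtype K.ker_subtype
  set castq : Fin d → (n → ℝ) := fun j => fun i => ((q j i : ℝ)) with hcastq
  have castmem : ∀ j, castq j ∈ LinearMap.ker g := by
    intro j
    simp only [hg, LinearMap.mem_ker, Matrix.mulVecLin_apply]
    rw [hcastq]
    simp only [mulVec_cast' B (q j), hqK j]
    funext k; simp
  set L := Submodule.span ℝ (Set.range castq) with hL
  have hLle : L ≤ LinearMap.ker g := by
    rw [hL, Submodule.span_le]
    rintro x ⟨j, rfl⟩
    exact castmem j
  have hLrank : finrank ℝ L = d := by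
    rw [hL, finrank_span_eq_card (li_cast q hqli), Fintype.card_fin]
  set R := LinearMap.range B.mulVecLin with hR
  set r := finrank ℚ R with hr
  let bR : Basis (Fin r) ℚ R := Module.finBasis ℚ R
  set u : Fin r → (ι → ℚ) := fun j => (bR j : ι → ℚ) with hu
  have huli : LinearIndependent ℚ u := bR.linearIndependent.map' R.subtype R.ker_subtype
  have humem : ∀ j, (fun i => ((u j i : ℝ))) ∈ LinearMap.range g := by
    intro j
    obtain ⟨x, hx⟩ := (bR j).2
    refine ⟨fun i => ((x i : ℝ)), ?_⟩
    simp only [hg, Matrix.mulVecLin_apply, mulVec_cast' B x]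
    funext k
    rw [show B.mulVec x = u j from hx]
  have hrange_le : r ≤ finrank ℝ (LinearMap.range g) := by
    have : LinearIndependent ℝ (fun j => (⟨fun i => ((u j i : ℝ)), humem j⟩ :
        LinearMap.range g)) := by
      apply LinearIndependent.of_comp (LinearMap.range g).subtype
      exact li_cast u huli
    simpa using this.fintype_card_le_finrank
  have rn1 : finrank ℚ R + finrank ℚ K = Fintype.card n := by
    rw [hR, hK, LinearMap.finrank_range_add_finrank_ker, Module.finrank_pi]
  have rn2 : finrank ℝ (LinearMap.range g) + finrank ℝ (LinearMap.ker g) =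
      Fintype.card n := by
    rw [LinearMap.finrank_range_add_finrank_ker, Module.finrank_pi]
  have hker_le : finrank ℝ (LinearMap.ker g) ≤ d := by omega
  have hLeq : L = LinearMap.ker g :=
    Submodule.eq_of_le_of_finrank_le hLle (by omega)
  have hvmem : v ∈ L := by
    rw [hLeq]
    simpa [hg, LinearMap.mem_ker, Matrix.mulVecLin_apply] using hv
  rw [hL] at hvmem
  obtain ⟨c, hc⟩ := (Submodule.mem_span_range_iff_exists_fun ℝ).mp hvmem
  set T : ℝ := ∑ j, ∑ i, |(q j i : ℝ)| with hT
  have hT0 : 0 ≤ T := Finset.sum_nonneg fun j _ => Finset.sum_nonneg fun i _ => abs_nonneg _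
  set δ' := δ / (T + 1) with hδ'
  have hδ'0 : 0 < δ' := div_pos hδ (by linarith)
  have hrat : ∀ j, ∃ t : ℚ, |c j - (t : ℝ)| < δ' := fun j => exists_rat_near (c j) hδ'0
  choose t ht using hrat
  refine ⟨fun i => ∑ j, t j * q j i, ?_, ?_⟩
  · have : (fun i => ∑ j, t j * q j i) = ∑ j, t j • q j := by
      funext i; simp [Finset.sum_apply]
    rw [this, show B.mulVec (∑ j, t j • q j) = B.mulVecLin (∑ j, t j • q j) from rfl,
      map_sum]
    refine Finset.sum_eq_zero fun j _ => ?_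
    rw [Matrix.mulVecLin_apply, Matrix.mulVec_smul, hqK j, smul_zero]
  · intro i
    have hvi : v i = ∑ j, c j * (q j i : ℝ) := by
      rw [← hc]; simp [Finset.sum_apply, hcastq]
    have : ((∑ j, t j * q j i : ℚ) : ℝ) - v i = ∑ j, ((t j : ℝ) - c j) * (q j i : ℝ) := by
      rw [hvi]; push_cast; rw [← Finset.sum_sub_distrib]; congr 1; funext j; ring
    rw [this]
    calc |∑ j, ((t j : ℝ) - c j) * (q j i : ℝ)| ≤ ∑ j, |(t j : ℝ) - c j| * |(q j i : ℝ)| := by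
          refine (Finset.abs_sum_le_sum_abs _ _).trans ?_
          simp [abs_mul]
      _ ≤ ∑ j, δ' * |(q j i : ℝ)| := by
          refine Finset.sum_le_sum fun j _ => ?_
          have := (ht j)
          rw [abs_sub_comm] at this
          exact mul_le_mul_of_nonneg_right this.le (abs_nonneg _)
      _ = δ' * ∑ j, |(q j i : ℝ)| := by rw [Finset.mul_sum]
      _ ≤ δ' * T := by
          refine mul_le_mul_of_nonneg_left ?_ hδ'0.le
          refine Finset.sum_le_sum fun j _ => ?_
          exact Finset.single_le_sum (f := fun i' => |(q j i' : ℝ)|)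
            (fun i' _ => abs_nonneg _) (Finset.mem_univ i)
      _ < δ' * (T + 1) := by nlinarith
      _ = δ := by rw [hδ']; field_simp

private lemma sum_split {ι α : Type*} [Fintype ι] [DecidableEq ι] [Field α] [LinearOrder α] [IsStrictOrderedRing α]
    (S : Finset ι) (f : ι → α) :
    ∑ j, (if j ∈ Sᶜ then (1 : α) else -1) * f j = ∑ j ∈ Sᶜ, f j - ∑ j ∈ S, f j := by
  rw [← Finset.sum_add_sum_compl Sᶜ (fun j => (if j ∈ Sᶜ then (1 : α) else -1) * f j),
    compl_compl]
  rw [Finset.sum_congr rfl (fun j hj => by rw [if_pos hj, one_mul]),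
      Finset.sum_congr rfl (fun j (hj : j ∈ S) => by
        rw [if_neg (by simpa using hj), neg_one_mul])]
  rw [Finset.sum_neg_distrib]
  ring

private lemma rat_stmt {m n : ℕ} (A : Matrix (Fin m) (Fin n) ℚ) (S : Finset (Fin n))
    (hint : ∀ v : Fin n → ℤ, v ≠ 0 →
      (A.map ((↑) : ℚ → ℝ)).mulVec (fun j => (v j : ℝ)) = 0 →
      ∑ i ∈ S, |v i| < ∑ i ∈ Sᶜ, |v i|) :
    ∀ w : Fin n → ℚ, w ≠ 0 → A.mulVec w = 0 →
      ∑ i ∈ S, |w i| < ∑ i ∈ Sᶜ, |w i| := by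
  intro w hw hker
  set N : ℤ := ∏ i, ((w i).den : ℤ) with hN
  have hNpos : 0 < N := Finset.prod_pos fun i _ => by positivity
  have key : ∀ i, ∃ z : ℤ, (z : ℚ) = w i * N := by
    intro i
    obtain ⟨M, hM⟩ : ((w i).den : ℤ) ∣ N :=
      Finset.dvd_prod_of_mem (fun i => ((w i).den : ℤ)) (Finset.mem_univ i)
    refine ⟨(w i).num * M, ?_⟩
    have hden : ((w i).den : ℚ) ≠ 0 := by positivity
    have h1 : ((w i).num : ℚ) = w i * ((w i).den : ℚ) := by
      have h2 := Rat.num_div_den (w i)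
      rw [div_eq_iff hden] at h2
      exact h2
    push_cast [hM]
    rw [h1]
    ring
  choose z hz using key
  have hz0 : z ≠ 0 := by
    intro h0
    apply hw
    funext i
    have := hz i
    rw [h0] at this
    simp only [Pi.zero_apply, Int.cast_zero] at this
    have hN0 : (N : ℚ) ≠ 0 := by positivity
    rcases mul_eq_zero.mp this.symm with h | h
    · exact h
    · exact absurd h hN0
  have hzker : (A.map ((↑) : ℚ → ℝ)).mulVec (fun j => (z j : ℝ)) = 0 := by
    have hcast : (fun j => ((z j : ℝ))) = fun j => ((w j : ℝ)) * (N : ℝ) := by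
      funext j
      have : ((z j : ℚ) : ℝ) = ((w j * N : ℚ) : ℝ) := by rw [hz j]
      push_cast at this
      push_cast
      linarith
    rw [hcast]
    have : (fun j => ((w j : ℝ)) * (N : ℝ)) = (N : ℝ) • fun j => ((w j : ℝ)) := by
      funext j; simp [mul_comm]
    rw [this, Matrix.mulVec_smul, mulVec_cast' A w, hker]
    funext k; simp
  have hlt := hint z hz0 hzker
  have hcast : ∀ (T : Finset (Fin n)), ((∑ i ∈ T, |z i| : ℤ) : ℚ) = (∑ i ∈ T, |w i|) * N := by
    intro T
    push_cast
    rw [Finset.sum_mul]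
    refine Finset.sum_congr rfl fun i _ => ?_
    rw [hz i, abs_mul, abs_of_pos (show (0:ℚ) < (N:ℚ) by exact_mod_cast hNpos)]
  have hmul : (∑ i ∈ S, |w i|) * N < (∑ i ∈ Sᶜ, |w i|) * N := by
    rw [← hcast S, ← hcast Sᶜ]
    exact_mod_cast hlt
  have hN0 : (0 : ℚ) < N := by exact_mod_cast hNpos
  exact lt_of_mul_lt_mul_right hmul hN0.le

theorem stmt12 (m n : ℕ) (A : Matrix (Fin m) (Fin n) ℚ) (S : Finset (Fin n)) :
    (∀ v : Fin n → ℤ, v ≠ 0 →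
      (A.map ((↑) : ℚ → ℝ)).mulVec (fun j => (v j : ℝ)) = 0 →
      ∑ i ∈ S, |v i| < ∑ i ∈ Sᶜ, |v i|)
    ↔ (∀ v : Fin n → ℝ, v ≠ 0 → (A.map ((↑) : ℚ → ℝ)).mulVec v = 0 →
        ∑ i ∈ S, |v i| < ∑ i ∈ Sᶜ, |v i|) := by
  classical
  constructor
  · intro hint v hv0 hker
    have hrat := rat_stmt A S hint
    by_contra hcon
    push_neg at hcon
    set c : ℝ := ∑ i ∈ Sᶜ, |v i| - ∑ i ∈ S, |v i| with hc
    have hcle : c ≤ 0 := by rw [hc]; linarith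
    rcases lt_or_eq_of_le hcle with hclt | hceq
    · -- strict case : approximate with plain A
      have hδ : (0:ℝ) < (-c) / (n + 1) := by
        apply div_pos (by linarith) (by positivity)
      obtain ⟨w, hkw, hnear⟩ := exists_near A v hker hδ
      set δ := (-c) / (n+1) with hδdef
      have habs : ∀ i, |(w i : ℝ)| < |v i| + δ ∧ |v i| - δ < |(w i : ℝ)| := by
        intro i
        have h1 := hnear i
        constructor
        · have := abs_sub_abs_le_abs_sub ((w i : ℝ)) (v i)
          linarith [abs_lt.mp h1]
        · have := abs_sub_abs_le_abs_sub (v i) ((w i : ℝ))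
          rw [abs_sub_comm] at h1
          linarith [abs_lt.mp h1]
      have hSc : ∑ i ∈ Sᶜ, |(w i : ℝ)| ≤ ∑ i ∈ Sᶜ, |v i| + Sᶜ.card * δ := by
        calc ∑ i ∈ Sᶜ, |(w i : ℝ)| ≤ ∑ i ∈ Sᶜ, (|v i| + δ) :=
              Finset.sum_le_sum (fun i _ => (habs i).1.le)
          _ = _ := by rw [Finset.sum_add_distrib, Finset.sum_const, nsmul_eq_mul]
      have hS : ∑ i ∈ S, |v i| - S.card * δ ≤ ∑ i ∈ S, |(w i : ℝ)| := by
        have h2 : ∑ i ∈ S, (|v i| - δ) ≤ ∑ i ∈ S, |(w i : ℝ)| :=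
          Finset.sum_le_sum (fun i _ => (habs i).2.le)
        calc ∑ i ∈ S, |v i| - S.card * δ = ∑ i ∈ S, (|v i| - δ) := by
              rw [Finset.sum_sub_distrib, Finset.sum_const, nsmul_eq_mul]
          _ ≤ _ := h2
      have hcard : (S.card : ℝ) + Sᶜ.card = n := by
        have := Finset.card_add_card_compl S
        have h3 : S.card + Sᶜ.card = n := by simpa using this
        exact_mod_cast h3
      have hnd : (S.card : ℝ) * δ + Sᶜ.card * δ < -c := by
        have hδT : δ * ((n:ℝ) + 1) = -c := by
          rw [hδdef]; field_simp
        have : (S.card : ℝ) * δ + Sᶜ.card * δ = (n:ℝ) * δ := by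
          rw [← add_mul, hcard]
        rw [this]
        nlinarith [hδ]
      have hgw : ∑ i ∈ Sᶜ, |(w i:ℝ)| - ∑ i ∈ S, |(w i:ℝ)| < 0 := by
        linarith
      have hw0 : w ≠ 0 := by
        intro h0
        rw [h0] at hgw
        simp at hgw
      have := hrat w hw0 hkw
      have hcst : ((∑ i ∈ S, |w i| : ℚ) : ℝ) < ((∑ i ∈ Sᶜ, |w i| : ℚ) : ℝ) := by
        exact_mod_cast this
      push_cast at hcst
      linarith
    · -- equality case
      obtain ⟨i0, hi0⟩ := Function.ne_iff.mp hv0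
      simp only [Pi.zero_apply] at hi0
      set s : Fin n → ℚ := fun i => if 0 ≤ v i then 1 else -1 with hs
      set σ : Fin n → ℚ := fun j => (if j ∈ Sᶜ then 1 else -1) * s j with hσ
      set B : Matrix (Fin m ⊕ Fin n ⊕ Unit) (Fin n) ℚ :=
        Matrix.of (Sum.elim (fun i j => A i j)
          (Sum.elim (fun i j => if v i = 0 ∧ i = j then 1 else 0) (fun _ j => σ j))) with hB
      have hsv : ∀ i, (if 0 ≤ v i then (1:ℝ) else -1) * v i = |v i| := by
        intro i
        by_cases h0 : 0 ≤ v i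
        · simp [h0, abs_of_nonneg h0]
        · push_neg at h0
          simp [not_le.mpr h0, abs_of_neg h0]
      have hvB : (B.map ((↑) : ℚ → ℝ)).mulVec v = 0 := by
        funext k
        rcases k with i | i | u
        · have := congrFun hker i
          simpa [hB, Matrix.mulVec, dotProduct, Matrix.map] using this
        · simp only [hB, Matrix.mulVec, dotProduct, Matrix.map,
            Matrix.of_apply, Sum.elim_inl, Sum.elim_inr, Pi.zero_apply]
          by_cases h0 : v i = 0
          · simp [h0, apply_ite ((↑) : ℚ → ℝ)]
          · simp [h0]
        · simp only [hB, Matrix.mulVec, dotProduct, Matrix.map,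
            Matrix.of_apply, Sum.elim_inr, Pi.zero_apply]
          have : ∀ j, ((σ j : ℚ) : ℝ) * v j = (if j ∈ Sᶜ then (1:ℝ) else -1) * |v j| := by
            intro j
            rw [hσ, hs]
            push_cast [apply_ite ((↑) : ℚ → ℝ)]
            rw [mul_assoc, hsv j]
          simp_rw [this]
          rw [sum_split S (fun j => |v j|)]
          rw [hc] at hceq
          linarith
      -- choose δ
      set P : Finset (Fin n) := Finset.univ.filter (fun i => v i ≠ 0) with hP
      have hPne : P.Nonempty := ⟨i0, by simp [hP, hi0]⟩
      set δ : ℝ := P.inf' hPne (fun i => |v i|) with hδdef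
      have hδpos : 0 < δ := by
        rw [hδdef, Finset.lt_inf'_iff]
        intro i hi
        rw [hP, Finset.mem_filter] at hi
        exact abs_pos.mpr hi.2
      have hδle : ∀ i, v i ≠ 0 → δ ≤ |v i| := by
        intro i hi
        exact Finset.inf'_le _ (by simp [hP, hi])
      obtain ⟨w, hkw, hnear⟩ := exists_near B v hvB hδpos
      have hA : A.mulVec w = 0 := by
        funext i
        have := congrFun hkw (Sum.inl i)
        simpa [hB, Matrix.mulVec, dotProduct] using this
      have hZ : ∀ i, v i = 0 → w i = 0 := by
        intro i h0
        have := congrFun hkw (Sum.inr (Sum.inl i))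
        simpa [hB, Matrix.mulVec, dotProduct, h0] using this
      have hσw : ∑ j, σ j * w j = 0 := by
        have := congrFun hkw (Sum.inr (Sum.inr ()))
        simpa [hB, Matrix.mulVec, dotProduct] using this
      have hsig : ∀ i, s i * w i = |w i| := by
        intro i
        by_cases h0 : v i = 0
        · rw [hZ i h0]; simp
        · have hd := hδle i h0
          have h1 := hnear i
          rw [hs]
          by_cases hge : 0 ≤ v i
          · have hvpos : 0 < v i := lt_of_le_of_ne hge (Ne.symm h0)
            have : (0:ℝ) < (w i : ℝ) := by
              have := abs_lt.mp h1
              rw [abs_of_pos hvpos] at hd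
              linarith [this.1]
            have hw : 0 < w i := by exact_mod_cast this
            simp [hge, abs_of_pos hw]
          · push_neg at hge
            have : ((w i : ℝ)) < 0 := by
              have := abs_lt.mp h1
              rw [abs_of_neg hge] at hd
              linarith [this.2]
            have hw : w i < 0 := by exact_mod_cast this
            simp [not_le.mpr hge, abs_of_neg hw]
      have hsplit : ∑ j ∈ Sᶜ, |w j| - ∑ j ∈ S, |w j| = 0 := by
        rw [← sum_split S (fun j => |w j|)]
        rw [← hσw]
        refine Finset.sum_congr rfl fun j _ => ?_
        rw [hσ, mul_assoc, hsig j]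
      have hw0 : w ≠ 0 := by
        intro h0
        have h1 := hnear i0
        rw [h0] at h1
        simp only [Pi.zero_apply, Rat.cast_zero, zero_sub, abs_neg] at h1
        exact absurd h1 (not_lt.mpr (hδle i0 hi0))
      have := hrat w hw0 hA
      linarith
  · intro h v hv0 hker
    have hcast0 : (fun j => ((v j : ℝ))) ≠ 0 := by
      intro h0
      apply hv0
      funext j
      have := congrFun h0 j
      simpa using this
    have := h (fun j => ((v j : ℝ))) hcast0 hker
    have h2 : ((∑ i ∈ S, |v i| : ℤ) : ℝ) < ((∑ i ∈ Sᶜ, |v i| : ℤ) : ℝ) := by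
      push_cast
      convert this using 2 <;> simp
    exact_mod_cast h2
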